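/- Exponential runtime complexity: If R is a POE*-compatible TRS, then the innermost runtime complexity function satisfies rc_R(n) ∈ 2^{O(n)}; i.e., there exist constants c, d such that every call-by-value derivation starting from a basic term f(v_1,...,v_{k+l}) of size at most n has length at most c · 2^{d·n}. -/

import Mathlib

/-- Terms over signature `F` and variables `V`, with the argument positions of
each function symbol separated into normal (`nrm`) and safe (`saf`) ones. -/
inductive Tm (F V : Type) where
  | var : V → Tm F V
  | app : F → List (Tm F V) → List (Tm F V) → Tm F V

namespace Tm

/-- Values: terms built from constructors (symbols in `C`) only; constructors
have only safe argument positions. -/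
inductive IsVal {F V : Type} (C : Set F) : Tm F V → Prop where
  | app {f ss} : f ∈ C → (∀ t ∈ ss, IsVal C t) → IsVal C (Tm.app f [] ss)

/-- Constructor terms: terms built from constructors and variables only. -/
inductive IsConTm {F V : Type} (C : Set F) : Tm F V → Prop where
  | var (v : V) : IsConTm C (Tm.var v)
  | app {f ss} : f ∈ C → (∀ t ∈ ss, IsConTm C t) → IsConTm C (Tm.app f [] ss)

/-- Application of a substitution to a term. -/
def subst {F V : Type} (σ : V → Tm F V) : Tm F V → Tm F V
  | Tm.var v => σ v
  | Tm.app f ns ss => Tm.app f (ns.attach.map fun t => subst σ t.1)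
                               (ss.attach.map fun t => subst σ t.1)
  decreasing_by
    · have := List.sizeOf_lt_of_mem t.2; simp; omega
    · have := List.sizeOf_lt_of_mem t.2; simp; omega

/-- The size of a term: the number of symbols occurring in it. -/
def size {F V : Type} : Tm F V → ℕ
  | Tm.var _ => 1
  | Tm.app _ ns ss => 1 + ((ns.attach.map fun t => size t.1).sum
                            + (ss.attach.map fun t => size t.1).sum)
  decreasing_by
    · have := List.sizeOf_lt_of_mem t.2; simp; omega
    · have := List.sizeOf_lt_of_mem t.2; simp; omega

/-- `SubEq s t` : `t` is a (not necessarily proper) subterm of `s`. -/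
inductive SubEq {F V : Type} : Tm F V → Tm F V → Prop where
  | refl (t) : SubEq t t
  | nrm {f ns ss s t} : s ∈ ns → SubEq s t → SubEq (Tm.app f ns ss) t
  | saf {f ns ss s t} : s ∈ ss → SubEq s t → SubEq (Tm.app f ns ss) t

/-- `NSub s t` : `t` is a subterm of a normal argument of `s`
(the relation written `s ⊳ⁿ t`). -/
def NSub {F V : Type} (s t : Tm F V) : Prop :=
  ∃ f ns ss, s = Tm.app f ns ss ∧ ∃ u ∈ ns, SubEq u t

/-- Call-by-value rewriting for a set of rules `R`: root steps instantiate a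
rule with a substitution mapping variables to values, and rewriting is closed
under contexts. -/
inductive Rew {F V : Type} (C : Set F) (R : Set (Tm F V × Tm F V)) : Tm F V → Tm F V → Prop where
  | root {l r : Tm F V} (σ : V → Tm F V) :
      (l, r) ∈ R → (∀ v, IsVal C (σ v)) → Rew C R (subst σ l) (subst σ r)
  | ctxtN {s t f ns₁ ns₂ ss} : Rew C R s t →
      Rew C R (Tm.app f (ns₁ ++ s :: ns₂) ss) (Tm.app f (ns₁ ++ t :: ns₂) ss)
  | ctxtS {s t f ns ss₁ ss₂} : Rew C R s t →
      Rew C R (Tm.app f ns (ss₁ ++ s :: ss₂)) (Tm.app f ns (ss₁ ++ t :: ss₂))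

mutual
  /-- The POE* order `⊐` induced by a precedence `prec` and constructors `C`
  (Definition of `poe`); symbols not in `C` are the defined symbols. -/
  inductive Poe {F V : Type} (prec : F → F → Prop) (C : Set F) : Tm F V → Tm F V → Prop where
    /- clause (1), `sᵢ = t`: `t` is one of the (normal or safe) arguments -/
    | sub {f ns ss t} : t ∈ ns ++ ss → Poe prec C (Tm.app f ns ss) t
    /- clause (1), `sᵢ ⊐ t` for an argument `sᵢ` -/
    | subtrans {f ns ss u t} : u ∈ ns ++ ss → Poe prec C u t → Poe prec C (Tm.app f ns ss) t
    /- clause (2): precedence descent; normal arguments of `t` are subterms of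
       normal arguments of `s`, and `s ⊐` every safe argument of `t` -/
    | ia {f g : F} {ns ss tn ts} : f ∉ C → prec f g →
        (∀ t' ∈ tn, NSub (Tm.app f ns ss) t') →
        (∀ t' ∈ ts, Poe prec C (Tm.app f ns ss) t') →
        Poe prec C (Tm.app f ns ss) (Tm.app g tn ts)
    /- clause (3): same defined root symbol, product descent on normal
       arguments, `s ⊐` every safe argument of `t` -/
    | tsc {f : F} {ns ss tn ts} : f ∉ C →
        PoeProd prec C ns tn →
        (∀ t' ∈ ts, Poe prec C (Tm.app f ns ss) t') →
        Poe prec C (Tm.app f ns ss) (Tm.app f tn ts)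

  /-- Product extension of `⊐`: componentwise equal-or-smaller with at least
  one strict decrease. -/
  inductive PoeProd {F V : Type} (prec : F → F → Prop) (C : Set F) :
      List (Tm F V) → List (Tm F V) → Prop where
    | strict {a b as bs} : Poe prec C a b → PoeGE prec C as bs →
        PoeProd prec C (a :: as) (b :: bs)
    | cons_eq {a as bs} : PoeProd prec C as bs → PoeProd prec C (a :: as) (a :: bs)
    | cons_lt {a b as bs} : Poe prec C a b → PoeProd prec C as bs →
        PoeProd prec C (a :: as) (b :: bs)

  /-- Componentwise equal-or-smaller (w.r.t. `⊐`) lists of equal length. -/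
  inductive PoeGE {F V : Type} (prec : F → F → Prop) (C : Set F) :
      List (Tm F V) → List (Tm F V) → Prop where
    | nil : PoeGE prec C [] []
    | cons_eq {a as bs} : PoeGE prec C as bs → PoeGE prec C (a :: as) (a :: bs)
    | cons_lt {a b as bs} : Poe prec C a b → PoeGE prec C as bs →
        PoeGE prec C (a :: as) (b :: bs)
end

/-- `R` is compatible with the POE* order induced by `prec`, and is a
constructor TRS: every left-hand side has a defined root symbol and its
arguments are constructor terms. -/
def PoeCompatible {F V : Type} (prec : F → F → Prop) (C : Set F)
    (R : Set (Tm F V × Tm F V)) : Prop :=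
  ∀ p ∈ R, Poe prec C p.1 p.2 ∧
    ∃ f ns ss, p.1 = Tm.app f ns ss ∧ f ∉ C ∧ ∀ t ∈ ns ++ ss, IsConTm C t

/-- `TN`: the set of terms whose normal argument positions hold values. -/
inductive TN {F V : Type} (C : Set F) : Tm F V → Prop where
  | val {t} : IsVal C t → TN C t
  | app {f ns ss} : (∀ v ∈ ns, IsVal C v) → (∀ t ∈ ss, TN C t) →
      TN C (Tm.app f ns ss)

end Tm

namespace ExpRC
open Tm

variable {F V : Type}

/-! ### Basic unfolding lemmas -/

theorem attach_map {α β : Type*} (l : List α) (g : α → β) :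
    (l.attach.map fun t => g t.1) = l.map g := by
  rw [List.map_attach_eq_pmap]
  exact List.pmap_eq_map _

theorem subst_app (σ : V → Tm F V) (f : F) (ns ss : List (Tm F V)) :
    subst σ (Tm.app f ns ss) = Tm.app f (ns.map (subst σ)) (ss.map (subst σ)) := by
  rw [subst, attach_map, attach_map]

theorem size_app (f : F) (ns ss : List (Tm F V)) :
    size (Tm.app f ns ss) = 1 + ((ns.map size).sum + (ss.map size).sum) := by
  rw [size, attach_map, attach_map]

theorem size_pos : ∀ t : Tm F V, 1 ≤ size t
  | .var v => by rw [size]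
  | .app f ns ss => by rw [size_app]; omega

/-- rank of a symbol w.r.t. the precedence -/
noncomputable def rkOf (prec : F → F → Prop) (f : F) : ℕ := {g | prec f g}.ncard

theorem rk_lt [Finite F] {prec : F → F → Prop} (hirr : ∀ f, ¬ prec f f)
    (htrans : ∀ f g h, prec f g → prec g h → prec f h) {f g : F} (h : prec f g) :
    rkOf prec g < rkOf prec f := by
  apply Set.ncard_lt_ncard _ (Set.toFinite _)
  constructor
  · intro x hx; exact htrans _ _ _ h hx
  · intro hsub
    exact hirr g (hsub h)

theorem rk_le_card [Finite F] (prec : F → F → Prop) (f : F) :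
    rkOf prec f ≤ Nat.card F := by
  rw [← Set.ncard_univ]
  exact Set.ncard_le_ncard (Set.subset_univ _) (Set.toFinite _)

/-- The measure. `A` is `l0+1`, `l0` a bound on rule sizes. -/
noncomputable def meas (C : Set F) (prec : F → F → Prop) (A l0 : ℕ) : Tm F V → ℕ
  | .var _ => 0
  | .app f ns ss =>
      (@ite _ (f ∈ C) (Classical.propDecidable _) 0
        (2 ^ (A ^ (rkOf prec f + 1) * ((ns.attach.map fun t => size t.1).sum + l0))))
      + (ss.attach.map fun t => meas C prec A l0 t.1).sum
  decreasing_by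
    · have := List.sizeOf_lt_of_mem t.2; simp; omega

theorem meas_app (C : Set F) (prec : F → F → Prop) (A l0 : ℕ) (f : F)
    (ns ss : List (Tm F V)) :
    meas C prec A l0 (Tm.app f ns ss) =
      (@ite _ (f ∈ C) (Classical.propDecidable _) 0
        (2 ^ (A ^ (rkOf prec f + 1) * ((ns.map size).sum + l0))))
      + (ss.map (meas C prec A l0)).sum := by
  rw [meas, attach_map, attach_map]

theorem meas_val {C : Set F} {prec : F → F → Prop} {A l0 : ℕ} {v : Tm F V}
    (h : IsVal C v) : meas C prec A l0 v = 0 := by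
  induction h with
  | app hf hss ih =>
    rw [meas_app, if_pos hf]
    simp only [zero_add]
    apply List.sum_eq_zero
    intro x hx
    obtain ⟨t, ht, rfl⟩ := List.mem_map.mp hx
    exact ih t ht

theorem isVal_subst {C : Set F} {σ : V → Tm F V} (hσ : ∀ v, IsVal C (σ v))
    {t : Tm F V} (h : IsConTm C t) : IsVal C (subst σ t) := by
  induction h with
  | var v => rw [subst]; exact hσ v
  | app hf hss ih =>
    rw [subst_app]
    simp only [List.map_nil]
    refine IsVal.app hf ?_
    intro u hu
    obtain ⟨t, ht, rfl⟩ := List.mem_map.mp hu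
    exact ih t ht

theorem subEq_con {C : Set F} {s t : Tm F V} (hcon : IsConTm C s) (h : SubEq s t) :
    IsConTm C t := by
  induction h with
  | refl => exact hcon
  | nrm hmem _ ih =>
    cases hcon with
    | app hf hss => simp at hmem
  | saf hmem _ ih =>
    cases hcon with
    | app hf hss => exact ih (hss _ hmem)

theorem subEq_size_subst {s t : Tm F V} (h : SubEq s t) (σ : V → Tm F V) :
    size (subst σ t) ≤ size (subst σ s) := by
  induction h with
  | refl => exact le_rfl
  | @nrm f ns ss u t hmem _ ih =>
    refine ih.trans ?_
    rw [subst_app, size_app]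
    have hm : size (subst σ u) ∈ (ns.map (subst σ)).map size :=
      List.mem_map_of_mem (List.mem_map_of_mem hmem)
    have := List.single_le_sum (by intro x _; exact Nat.zero_le x) _ hm
    omega
  | @saf f ns ss u t hmem _ ih =>
    refine ih.trans ?_
    rw [subst_app, size_app]
    have hm : size (subst σ u) ∈ (ss.map (subst σ)).map size :=
      List.mem_map_of_mem (List.mem_map_of_mem hmem)
    have := List.single_le_sum (by intro x _; exact Nat.zero_le x) _ hm
    omega

end ExpRC
namespace ExpRC
open Tm

variable {F V : Type}

/-- `Poe` from a constructor term goes to a proper subterm. -/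
theorem con_poe {C : Set F} {prec : F → F → Prop} {u : Tm F V}
    (hcon : IsConTm C u) : ∀ t, Poe prec C u t →
    IsConTm C t ∧ ∀ σ : V → Tm F V, size (subst σ t) < size (subst σ u) := by
  induction hcon with
  | var v =>
    intro t h
    cases h
  | @app f ss hf hss ih =>
    intro t h
    cases h with
    | sub hmem =>
      simp only [List.nil_append] at hmem
      refine ⟨hss _ hmem, ?_⟩
      intro σ
      rw [subst_app, size_app]
      have hm : size (subst σ t) ∈ (ss.map (subst σ)).map size :=
        List.mem_map_of_mem (List.mem_map_of_mem hmem)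
      have := List.single_le_sum (by intro x _; exact Nat.zero_le x) _ hm
      omega
    | subtrans hmem hp =>
      rename_i u'
      simp only [List.nil_append] at hmem
      obtain ⟨h1, h2⟩ := ih u' hmem t hp
      refine ⟨h1, ?_⟩
      intro σ
      refine (h2 σ).trans_le ?_
      rw [subst_app, size_app]
      have hm : size (subst σ u') ∈ (ss.map (subst σ)).map size :=
        List.mem_map_of_mem (List.mem_map_of_mem hmem)
      have := List.single_le_sum (by intro x _; exact Nat.zero_le x) _ hm
      omega
    | ia hfC _ _ _ => exact absurd hf hfC
    | tsc hfC _ _ => exact absurd hf hfC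

theorem poeGE_cons_inv {C : Set F} {prec : F → F → Prop} {a : Tm F V}
    {as bs : List (Tm F V)} (h : PoeGE prec C (a :: as) bs) :
    ∃ b bs', bs = b :: bs' ∧ (b = a ∨ Poe prec C a b) ∧ PoeGE prec C as bs' := by
  cases h with
  | cons_eq h' => exact ⟨_, _, rfl, Or.inl rfl, h'⟩
  | cons_lt hab h' => exact ⟨_, _, rfl, Or.inr hab, h'⟩

theorem poeProd_cons_inv {C : Set F} {prec : F → F → Prop} {a : Tm F V}
    {as bs : List (Tm F V)} (h : PoeProd prec C (a :: as) bs) :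
    ∃ b bs', bs = b :: bs' ∧
      ((Poe prec C a b ∧ PoeGE prec C as bs') ∨
       (b = a ∧ PoeProd prec C as bs') ∨
       (Poe prec C a b ∧ PoeProd prec C as bs')) := by
  cases h with
  | strict hab hge => exact ⟨_, _, rfl, Or.inl ⟨hab, hge⟩⟩
  | cons_eq h' => exact ⟨_, _, rfl, Or.inr (Or.inl ⟨rfl, h'⟩)⟩
  | cons_lt hab h' => exact ⟨_, _, rfl, Or.inr (Or.inr ⟨hab, h'⟩)⟩

theorem poeGE_con_size {C : Set F} {prec : F → F → Prop} :
    ∀ {as bs : List (Tm F V)}, PoeGE prec C as bs → (∀ a ∈ as, IsConTm C a) →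
    (∀ b ∈ bs, IsConTm C b) ∧ ∀ σ : V → Tm F V,
      (bs.map fun b => size (subst σ b)).sum ≤ (as.map fun a => size (subst σ a)).sum := by
  intro as
  induction as with
  | nil =>
    intro bs h hcon
    cases h
    exact ⟨by simp, by simp⟩
  | cons a as' ih =>
    intro bs h hcon
    obtain ⟨b, bs', rfl, hhead, htail⟩ := poeGE_cons_inv h
    obtain ⟨h1, h2⟩ := ih htail (fun x hx => hcon x (by simp [hx]))
    have hacon : IsConTm C a := hcon a (by simp)
    have hbcon : IsConTm C b ∧ ∀ σ : V → Tm F V,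
        size (subst σ b) ≤ size (subst σ a) := by
      rcases hhead with rfl | hab
      · exact ⟨hacon, fun σ => le_rfl⟩
      · obtain ⟨hb, hsz⟩ := con_poe hacon b hab
        exact ⟨hb, fun σ => le_of_lt (hsz σ)⟩
    refine ⟨?_, ?_⟩
    · intro x hx
      rcases List.mem_cons.mp hx with rfl | hx
      · exact hbcon.1
      · exact h1 x hx
    · intro σ
      simp only [List.map_cons, List.sum_cons]
      exact Nat.add_le_add (hbcon.2 σ) (h2 σ)

theorem poeProd_con_size {C : Set F} {prec : F → F → Prop} :
    ∀ {as bs : List (Tm F V)}, PoeProd prec C as bs → (∀ a ∈ as, IsConTm C a) →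
    (∀ b ∈ bs, IsConTm C b) ∧ ∀ σ : V → Tm F V,
      (bs.map fun b => size (subst σ b)).sum < (as.map fun a => size (subst σ a)).sum := by
  intro as
  induction as with
  | nil =>
    intro bs h hcon
    cases h
  | cons a as' ih =>
    intro bs h hcon
    obtain ⟨b, bs', rfl, hcase⟩ := poeProd_cons_inv h
    have hconas : ∀ x ∈ as', IsConTm C x := fun x hx => hcon x (by simp [hx])
    have hacon : IsConTm C a := hcon a (by simp)
    rcases hcase with ⟨hab, hge⟩ | ⟨rfl, hprod⟩ | ⟨hab, hprod⟩
    · obtain ⟨h1, h2⟩ := poeGE_con_size hge hconas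
      obtain ⟨hb, hsz⟩ := con_poe hacon b hab
      refine ⟨?_, ?_⟩
      · intro x hx
        rcases List.mem_cons.mp hx with rfl | hx
        · exact hb
        · exact h1 x hx
      · intro σ
        simp only [List.map_cons, List.sum_cons]
        exact Nat.add_lt_add_of_lt_of_le (hsz σ) (h2 σ)
    · obtain ⟨h1, h2⟩ := ih hprod hconas
      refine ⟨?_, ?_⟩
      · intro x hx
        rcases List.mem_cons.mp hx with rfl | hx
        · exact hacon
        · exact h1 x hx
      · intro σ
        simp only [List.map_cons, List.sum_cons]
        exact Nat.add_lt_add_left (h2 σ) _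
    · obtain ⟨h1, h2⟩ := ih hprod hconas
      obtain ⟨hb, hsz⟩ := con_poe hacon b hab
      refine ⟨?_, ?_⟩
      · intro x hx
        rcases List.mem_cons.mp hx with rfl | hx
        · exact hb
        · exact h1 x hx
      · intro σ
        simp only [List.map_cons, List.sum_cons]
        exact Nat.add_lt_add (hsz σ) (h2 σ)

/-- normal subterms of a basic term are constructor terms of bounded size -/
theorem nsub_con_size {C : Set F} {f : F} {ln ls : List (Tm F V)}
    (hcon : ∀ t ∈ ln ++ ls, IsConTm C t) {t' : Tm F V}
    (h : NSub (Tm.app f ln ls) t') :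
    IsConTm C t' ∧ ∀ σ : V → Tm F V,
      size (subst σ t') ≤ (ln.map fun a => size (subst σ a)).sum := by
  obtain ⟨f', ns', ss', heq, u, hu, hsub⟩ := h
  cases heq
  have hucon : IsConTm C u := hcon u (List.mem_append_left _ hu)
  refine ⟨subEq_con hucon hsub, ?_⟩
  intro σ
  refine (subEq_size_subst hsub σ).trans ?_
  have hm : size (subst σ u) ∈ ln.map fun a => size (subst σ a) :=
    List.mem_map_of_mem hu
  exact List.single_le_sum (by intro x _; exact Nat.zero_le x) _ hm

/-! ### Arithmetic helpers -/

theorem two_pow_add_two_pow_le {x y z : ℕ} (hx : x < z) (hy : y < z) :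
    2 ^ x + 2 ^ y ≤ 2 ^ z := by
  have h1 : 2 ^ x ≤ 2 ^ (z - 1) := Nat.pow_le_pow_right (by norm_num) (by omega)
  have h2 : 2 ^ y ≤ 2 ^ (z - 1) := Nat.pow_le_pow_right (by norm_num) (by omega)
  have h3 : 2 ^ (z - 1) + 2 ^ (z - 1) = 2 ^ z := by
    rw [← two_mul, ← pow_succ']
    congr 1
    omega
  omega

theorem sum_two_pow_le {L : List ℕ} (h : ∀ x ∈ L, 1 ≤ x) :
    (L.map (2 ^ ·)).sum ≤ 2 ^ L.sum := by
  induction L with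
  | nil => simp
  | cons a L' ih =>
    simp only [List.map_cons, List.sum_cons]
    rcases L' with _ | ⟨b, L''⟩
    · simp
    · have hS : 1 ≤ (b :: L'').sum := by
        have := h b (by simp)
        simp only [List.sum_cons]
        omega
      have ha : 1 ≤ a := h a (by simp)
      have htail := ih (fun x hx => h x (by simp [hx]))
      have hkey : 2 ^ a + 2 ^ (b :: L'').sum ≤ 2 ^ (a + (b :: L'').sum) := by
        rw [pow_add]
        have h2a : 2 ≤ 2 ^ a := by
          calc 2 = 2 ^ 1 := (pow_one 2).symm
          _ ≤ 2 ^ a := Nat.pow_le_pow_right (by norm_num) ha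
        have h2S : 2 ≤ 2 ^ (b :: L'').sum := by
          calc 2 = 2 ^ 1 := (pow_one 2).symm
          _ ≤ 2 ^ (b :: L'').sum := Nat.pow_le_pow_right (by norm_num) hS
        exact Nat.add_le_mul h2a h2S
      omega

theorem length_le_size_sum (L : List (Tm F V)) : L.length ≤ (L.map size).sum := by
  induction L with
  | nil => simp
  | cons a L' ih =>
    simp only [List.length_cons, List.map_cons, List.sum_cons]
    have := size_pos a
    omega

theorem sum_le_length_mul {L : List ℕ} {N : ℕ} (h : ∀ x ∈ L, x ≤ N) :
    L.sum ≤ L.length * N := by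
  induction L with
  | nil => simp
  | cons a L' ih =>
    simp only [List.sum_cons, List.length_cons]
    have h1 := h a (by simp)
    have h2 := ih (fun x hx => h x (by simp [hx]))
    have h3 : (L'.length + 1) * N = L'.length * N + N := by ring
    omega

end ExpRC
namespace ExpRC
open Tm

variable {F V : Type}

theorem sum_map_mul_right {α : Type*} (L : List α) (f : α → ℕ) (c : ℕ) :
    (L.map f).sum * c = (L.map fun x => f x * c).sum := by
  induction L with
  | nil => simp
  | cons a L' ih => simp only [List.map_cons, List.sum_cons, Nat.add_mul, ih]

theorem sum_map_le_sum_map {α : Type*} (L : List α) (f g : α → ℕ)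
    (h : ∀ x ∈ L, f x ≤ g x) : (L.map f).sum ≤ (L.map g).sum := by
  induction L with
  | nil => simp
  | cons a L' ih =>
    simp only [List.map_cons, List.sum_cons]
    exact Nat.add_le_add (h a (by simp)) (ih (fun x hx => h x (by simp [hx])))

theorem sum_map_pow_add {α : Type*} (L : List α) (c : ℕ) (f : α → ℕ) :
    (L.map fun x => 2 ^ (c + f x)).sum = 2 ^ c * (L.map fun x => 2 ^ f x).sum := by
  induction L with
  | nil => simp
  | cons a L' ih =>
    rw [List.map_cons, List.sum_cons, ih, pow_add, List.map_cons, List.sum_cons, Nat.mul_add]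

theorem sum_map_two_pow {α : Type*} (L : List α) (c : ℕ) (f : α → ℕ)
    (hf : ∀ x ∈ L, 1 ≤ f x) :
    (L.map fun x => 2 ^ (c + f x)).sum ≤ 2 ^ (c + (L.map f).sum) := by
  rw [sum_map_pow_add, pow_add]
  apply Nat.mul_le_mul_left
  have heq : (L.map fun x => 2 ^ f x).sum = ((L.map f).map (2 ^ ·)).sum := by
    rw [List.map_map]; rfl
  rw [heq]
  apply sum_two_pow_le
  intro x hx
  obtain ⟨a, ha, rfl⟩ := List.mem_map.mp hx
  exact hf a ha

/-- The main decrease claim: anything `Poe`-below a basic term `f(ln;ls)` of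
size at most `l0` has exponentially bounded measure. -/
theorem main_claim [Finite F] {C : Set F} {prec : F → F → Prop}
    (hirr : ∀ f, ¬ prec f f) (htrans : ∀ f g h, prec f g → prec g h → prec f h)
    {l0 : ℕ} (hl0 : 2 ≤ l0) {f : F} {ln ls : List (Tm F V)}
    (hcon : ∀ t ∈ ln ++ ls, IsConTm C t)
    {σ : V → Tm F V} (hσ : ∀ v, IsVal C (σ v)) :
    ∀ (k : ℕ) (t : Tm F V), size t ≤ k → Poe prec C (Tm.app f ln ls) t → size t ≤ l0 →
      meas C prec (l0+1) l0 (subst σ t) * 2 ^ (l0+1) ≤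
      2 ^ ((l0+1) ^ (rkOf prec f + 1) *
            ((ln.map fun a => size (subst σ a)).sum + l0) + size t) := by
  intro k
  induction k with
  | zero => intro t hk; exact absurd hk (by have := size_pos t; omega)
  | succ k ih =>
    intro t hk hpoe htl0
    set N : ℕ := (ln.map fun a => size (subst σ a)).sum with hN
    set Bud : ℕ := (l0+1) ^ (rkOf prec f + 1) * (N + l0) with hBud
    cases hpoe with
    | sub hmem =>
      have : IsVal C (subst σ t) := isVal_subst hσ (hcon t hmem)
      rw [meas_val this, Nat.zero_mul]
      exact Nat.zero_le _
    | subtrans hmem hp =>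
      rename_i u
      have hcont : IsConTm C t := (con_poe (hcon u hmem) t hp).1
      rw [meas_val (isVal_subst hσ hcont), Nat.zero_mul]
      exact Nat.zero_le _
    | ia hfC hprec htn hts =>
      rename_i g tn ts
      rw [subst_app, meas_app, List.map_map, List.map_map]
      simp only [Function.comp_def]
      have hsizet : size (Tm.app g tn ts) =
          1 + ((tn.map size).sum + (ts.map size).sum) := size_app g tn ts
      have hsafe : (ts.map fun u => meas C prec (l0+1) l0 (subst σ u)).sum * 2^(l0+1) ≤
          2 ^ (Bud + (ts.map size).sum) := by
        rw [sum_map_mul_right]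
        refine le_trans (sum_map_le_sum_map _ _ (fun u => 2 ^ (Bud + size u)) ?_) ?_
        · intro u hu
          have hu1 : 1 ≤ size u := size_pos u
          have humem : size u ≤ (ts.map size).sum :=
            List.single_le_sum (by intro x _; exact Nat.zero_le x) _
              (List.mem_map_of_mem hu)
          exact ih u (by omega) (hts u hu) (by omega)
        · exact sum_map_two_pow ts Bud size (fun u _ => size_pos u)
      have htssum : (ts.map size).sum < size (Tm.app g tn ts) := by omega
      by_cases hgC : g ∈ C
      · rw [if_pos hgC, Nat.zero_add]
        refine hsafe.trans (Nat.pow_le_pow_right (by norm_num) ?_)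
        omega
      · rw [if_neg hgC]
        set Ntn : ℕ := (tn.map fun u => size (subst σ u)).sum with hNtn
        set H : ℕ := (l0+1) ^ (rkOf prec g + 1) * (Ntn + l0) with hH
        have hmem_le : ∀ x ∈ tn.map fun u => size (subst σ u), x ≤ N := by
          intro x hx
          obtain ⟨u, hu, rfl⟩ := List.mem_map.mp hx
          exact (nsub_con_size hcon (htn u hu)).2 σ
        have hNtn_le : Ntn ≤ tn.length * N := by
          have := sum_le_length_mul hmem_le
          simpa using this
        have hlen : tn.length + 1 ≤ l0 := by
          have h1 := length_le_size_sum tn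
          have h2 := size_pos (Tm.app g tn ts)
          omega
        have hkey : H + l0 + 2 ≤ Bud := by
          have hrk : rkOf prec g + 1 ≤ rkOf prec f := rk_lt hirr htrans hprec
          set P : ℕ := (l0+1) ^ (rkOf prec g + 1) with hP
          have hP1 : 1 ≤ P := Nat.one_le_pow _ _ (by omega)
          have hPB : P * (l0+1) ≤ (l0+1) ^ (rkOf prec f + 1) := by
            rw [hP, ← pow_succ]
            exact Nat.pow_le_pow_right (by omega) (by omega)
          have hinner : tn.length * N + 2*l0 + 2 ≤ (l0+1) * (N + l0) := by
            have hm : tn.length * N + N ≤ l0 * N := by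
              have := Nat.mul_le_mul_right N hlen
              rw [Nat.succ_mul] at this
              omega
            nlinarith
          calc H + l0 + 2 = P * (Ntn + l0) + l0 + 2 := by rw [hH]
            _ ≤ P * (tn.length * N + l0) + (l0 + 2) * P := by
                have h5 := Nat.mul_le_mul_left P (Nat.add_le_add_right hNtn_le l0)
                nlinarith
            _ = P * (tn.length * N + 2*l0 + 2) := by ring
            _ ≤ P * ((l0+1) * (N + l0)) := Nat.mul_le_mul_left P hinner
            _ = (P * (l0+1)) * (N + l0) := by ring
            _ ≤ (l0+1) ^ (rkOf prec f + 1) * (N + l0) := Nat.mul_le_mul_right _ hPB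
        rw [Nat.add_mul]
        have hhead : 2 ^ H * 2 ^ (l0+1) = 2 ^ (H + (l0+1)) := (pow_add 2 H (l0+1)).symm
        rw [hhead]
        refine le_trans (Nat.add_le_add le_rfl hsafe) ?_
        have h6 := size_pos (Tm.app g tn ts)
        have h7 : H + (l0+1) < Bud + size (Tm.app g tn ts) := by omega
        exact two_pow_add_two_pow_le h7 (by omega)
    | tsc hfC hprod hts =>
      rename_i tn ts
      rw [subst_app, meas_app, List.map_map, List.map_map]
      simp only [Function.comp_def]
      have hsizet : size (Tm.app f tn ts) =
          1 + ((tn.map size).sum + (ts.map size).sum) := size_app f tn ts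
      have hsafe : (ts.map fun u => meas C prec (l0+1) l0 (subst σ u)).sum * 2^(l0+1) ≤
          2 ^ (Bud + (ts.map size).sum) := by
        rw [sum_map_mul_right]
        refine le_trans (sum_map_le_sum_map _ _ (fun u => 2 ^ (Bud + size u)) ?_) ?_
        · intro u hu
          have hu1 : 1 ≤ size u := size_pos u
          have humem : size u ≤ (ts.map size).sum :=
            List.single_le_sum (by intro x _; exact Nat.zero_le x) _
              (List.mem_map_of_mem hu)
          exact ih u (by omega) (hts u hu) (by omega)
        · exact sum_map_two_pow ts Bud size (fun u _ => size_pos u)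
      have htssum : (ts.map size).sum < size (Tm.app f tn ts) := by omega
      rw [if_neg hfC]
      set Ntn : ℕ := (tn.map fun u => size (subst σ u)).sum with hNtn
      set H : ℕ := (l0+1) ^ (rkOf prec f + 1) * (Ntn + l0) with hH
      have hNtn_lt : Ntn + 1 ≤ N := by
        have := (poeProd_con_size hprod
          (fun x hx => hcon x (List.mem_append_left _ hx))).2 σ
        omega
      have hkey : H + l0 + 1 ≤ Bud := by
        set P : ℕ := (l0+1) ^ (rkOf prec f + 1) with hP
        have hP1 : l0 + 1 ≤ P := by
          calc l0 + 1 = (l0+1) ^ 1 := (pow_one _).symm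
          _ ≤ P := Nat.pow_le_pow_right (by omega) (by omega)
        calc H + l0 + 1 ≤ P * (Ntn + l0) + P := by
              rw [hH]; omega
          _ = P * (Ntn + l0 + 1) := by ring
          _ ≤ P * (N + l0) := Nat.mul_le_mul_left P (by omega)
      rw [Nat.add_mul]
      have hhead : 2 ^ H * 2 ^ (l0+1) = 2 ^ (H + (l0+1)) := (pow_add 2 H (l0+1)).symm
      rw [hhead]
      refine le_trans (Nat.add_le_add le_rfl hsafe) ?_
      have h6 := size_pos (Tm.app f tn ts)
      have h7 : H + (l0+1) < Bud + size (Tm.app f tn ts) := by omega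
      exact two_pow_add_two_pow_le h7 (by omega)

end ExpRC
namespace ExpRC
open Tm

variable {F V : Type}

/-- Instances of terms `Poe`-below a basic lhs are in `TN`. -/
theorem poe_TN {C : Set F} {prec : F → F → Prop} {f : F} {ln ls : List (Tm F V)}
    (hcon : ∀ t ∈ ln ++ ls, IsConTm C t)
    {σ : V → Tm F V} (hσ : ∀ v, IsVal C (σ v)) :
    ∀ (k : ℕ) (t : Tm F V), size t ≤ k → Poe prec C (Tm.app f ln ls) t →
      TN C (subst σ t) := by
  intro k
  induction k with
  | zero => intro t hk; exact absurd hk (by have := size_pos t; omega)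
  | succ k ih =>
    intro t hk hpoe
    cases hpoe with
    | sub hmem => exact TN.val (isVal_subst hσ (hcon t hmem))
    | subtrans hmem hp =>
      rename_i u
      exact TN.val (isVal_subst hσ ((con_poe (hcon u hmem) t hp).1))
    | ia hfC hprec htn hts =>
      rename_i g tn ts
      rw [subst_app]
      have hsizet : size (Tm.app g tn ts) =
          1 + ((tn.map size).sum + (ts.map size).sum) := size_app g tn ts
      refine TN.app ?_ ?_
      · intro v hv
        obtain ⟨u, hu, rfl⟩ := List.mem_map.mp hv
        exact isVal_subst hσ (nsub_con_size hcon (htn u hu)).1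
      · intro x hx
        obtain ⟨u, hu, rfl⟩ := List.mem_map.mp hx
        have humem : size u ≤ (ts.map size).sum :=
          List.single_le_sum (by intro y _; exact Nat.zero_le y) _
            (List.mem_map_of_mem hu)
        have hu1 : 1 ≤ size u := size_pos u
        exact ih u (by omega) (hts u hu)
    | tsc hfC hprod hts =>
      rename_i tn ts
      rw [subst_app]
      have hsizet : size (Tm.app f tn ts) =
          1 + ((tn.map size).sum + (ts.map size).sum) := size_app f tn ts
      refine TN.app ?_ ?_
      · intro v hv
        obtain ⟨u, hu, rfl⟩ := List.mem_map.mp hv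
        exact isVal_subst hσ ((poeProd_con_size hprod
          (fun x hx => hcon x (List.mem_append_left _ hx))).1 u hu)
      · intro x hx
        obtain ⟨u, hu, rfl⟩ := List.mem_map.mp hx
        have humem : size u ≤ (ts.map size).sum :=
          List.single_le_sum (by intro y _; exact Nat.zero_le y) _
            (List.mem_map_of_mem hu)
        have hu1 : 1 ≤ size u := size_pos u
        exact ih u (by omega) (hts u hu)

theorem isVal_head {C : Set F} {f : F} {ns ss : List (Tm F V)}
    (h : IsVal C (Tm.app f ns ss)) : f ∈ C := by
  cases h; assumption

theorem isVal_nil {C : Set F} {f : F} {ns ss : List (Tm F V)}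
    (h : IsVal C (Tm.app f ns ss)) : ns = [] := by
  cases h; rfl

/-- Values are irreducible. -/
theorem val_irred {C : Set F} {prec : F → F → Prop} {R : Set (Tm F V × Tm F V)}
    (hcompat : PoeCompatible prec C R) :
    ∀ {s t : Tm F V}, Rew C R s t → IsVal C s → False := by
  intro s t h
  induction h with
  | @root l r σ hmem hval =>
    intro hv
    obtain ⟨_, f, ln, ls, heq, hfC, _⟩ := hcompat _ hmem
    have heq' : l = Tm.app f ln ls := heq
    rw [heq', subst_app] at hv
    exact hfC (isVal_head hv)
  | ctxtN h ihr =>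
    intro hv
    have := isVal_nil hv
    simp at this
  | ctxtS h ihr =>
    intro hv
    cases hv with
    | app hf hss =>
      exact ihr (hss _ (List.mem_append_right _ (List.mem_cons_self)))

/-- One rewrite step preserves `TN` and strictly decreases the measure. -/
theorem step_decrease [Finite F] {C : Set F} {prec : F → F → Prop}
    {R : Set (Tm F V × Tm F V)}
    (hirr : ∀ f, ¬ prec f f) (htrans : ∀ f g h, prec f g → prec g h → prec f h)
    {l0 : ℕ} (hl0 : 2 ≤ l0) (hrsize : ∀ p ∈ R, size p.2 ≤ l0)
    (hcompat : PoeCompatible prec C R) :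
    ∀ {s t : Tm F V}, Rew C R s t → TN C s →
      TN C t ∧ meas C prec (l0+1) l0 t < meas C prec (l0+1) l0 s := by
  intro s t h
  induction h with
  | @root l r σ hmem hσ =>
    intro _
    obtain ⟨hpoe, f, ln, ls, heq, hfC, hargs⟩ := hcompat _ hmem
    subst heq
    refine ⟨poe_TN hargs hσ (size r) r le_rfl hpoe, ?_⟩
    have hmc := main_claim hirr htrans hl0 hargs hσ (size r) r le_rfl hpoe
      (hrsize _ hmem)
    set N : ℕ := (ln.map fun a => size (subst σ a)).sum with hN
    set Bud : ℕ := (l0+1) ^ (rkOf prec f + 1) * (N + l0) with hBud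
    have hls : meas C prec (l0+1) l0 (subst σ (Tm.app f ln ls)) = 2 ^ Bud := by
      rw [subst_app, meas_app, if_neg hfC, List.map_map, List.map_map]
      have hzero : (List.map (size ∘ subst σ) ln).sum = N := rfl
      rw [hzero]
      have : (List.map (meas C prec (l0+1) l0 ∘ subst σ) ls).sum = 0 := by
        apply List.sum_eq_zero
        intro x hx
        obtain ⟨u, hu, rfl⟩ := List.mem_map.mp hx
        exact meas_val (isVal_subst hσ (hargs u (List.mem_append_right _ hu)))
      rw [this, Nat.add_zero, ← hBud]
    rw [hls]
    have hrl0 : size r ≤ l0 := hrsize _ hmem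
    have hb1 : 2 ^ (Bud + size r) ≤ 2 ^ (Bud + l0) :=
      Nat.pow_le_pow_right (by norm_num) (by omega)
    by_contra hge
    push_neg at hge
    have h1 : 2 ^ Bud * 2 ^ (l0+1) ≤ meas C prec (l0+1) l0 (subst σ r) * 2 ^ (l0+1) :=
      Nat.mul_le_mul_right _ hge
    have h2 : 2 ^ Bud * 2 ^ (l0+1) = 2 ^ (Bud + (l0+1)) := (pow_add 2 Bud (l0+1)).symm
    have h3 : (2:ℕ) ^ (Bud + l0) < 2 ^ (Bud + (l0+1)) :=
      Nat.pow_lt_pow_right (by norm_num) (by omega)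
    omega
  | ctxtN h ihr =>
    intro hTN
    exfalso
    cases hTN with
    | val hv =>
      have := isVal_nil hv
      simp at this
    | app hns hss =>
      exact val_irred hcompat h
        (hns _ (List.mem_append_right _ (List.mem_cons_self)))
  | @ctxtS s t f ns ss₁ ss₂ h ihr =>
    intro hTN
    have hsplit : (∀ v ∈ ns, IsVal C v) ∧ (∀ x ∈ ss₁ ++ s :: ss₂, TN C x) := by
      cases hTN with
      | val hv =>
        cases hv with
        | app hf hss =>
          exact absurd (val_irred hcompat h
            (hss _ (List.mem_append_right _ (List.mem_cons_self)))) not_false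
      | app hns hss => exact ⟨hns, hss⟩
    have hsTN : TN C s :=
      hsplit.2 _ (List.mem_append_right _ (List.mem_cons_self))
    obtain ⟨hT', hlt⟩ := ihr hsTN
    constructor
    · refine TN.app hsplit.1 ?_
      intro x hx
      rcases List.mem_append.mp hx with hx | hx
      · exact hsplit.2 _ (List.mem_append_left _ hx)
      · rcases List.mem_cons.mp hx with rfl | hx
        · exact hT'
        · exact hsplit.2 _ (List.mem_append_right _ (List.mem_cons_of_mem _ hx))
    · rw [meas_app, meas_app]
      simp only [List.map_append, List.map_cons, List.sum_append, List.sum_cons]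
      omega

end ExpRC
open Tm in
/-- Exponential runtime complexity of POE*-compatible systems,
`rc_R(n) ∈ 2^{O(n)}`: there are constants `c, d` such that every call-by-value
derivation starting from a basic term `f(v₁,…,v_{k+l})` of size at most `n`
has length at most `c · 2^{d·n}`. -/
theorem exponential_runtime_complexity {F V : Type} [Finite F] (C : Set F)
    (prec : F → F → Prop)
    (hirr : ∀ f, ¬ prec f f) (htrans : ∀ f g h, prec f g → prec g h → prec f h)
    (R : Set (Tm F V × Tm F V)) (hfin : R.Finite)
    (hcompat : PoeCompatible prec C R) :
    ∃ c d : ℕ, ∀ (n : ℕ) (f : F) (ns ss : List (Tm F V)) (g : ℕ → Tm F V) (m : ℕ),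
      f ∉ C → (∀ v ∈ ns, IsVal C v) → (∀ v ∈ ss, IsVal C v) →
      g 0 = Tm.app f ns ss → size (g 0) ≤ n →
      (∀ i < m, Rew C R (g i) (g (i + 1))) →
      m ≤ c * 2 ^ (d * n) := by
  classical
  obtain ⟨L, hL⟩ : ∃ L, ∀ p ∈ R, size p.2 ≤ L := by
    obtain ⟨L, hL⟩ := (hfin.image fun p => size p.2).bddAbove
    exact ⟨L, fun p hp => hL (Set.mem_image_of_mem _ hp)⟩
  set l0 : ℕ := L + 2 with hl0def
  have hl0 : 2 ≤ l0 := by omega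
  have hrsize : ∀ p ∈ R, size p.2 ≤ l0 := fun p hp => (hL p hp).trans (by omega)
  set D : ℕ := (l0+1) ^ (Nat.card F + 1) with hD
  refine ⟨2 ^ (D * l0), D, ?_⟩
  intro n f ns ss g m hf hns hss hg0 hsize hrew
  have hTN0 : TN C (g 0) := by
    rw [hg0]; exact TN.app hns (fun t ht => TN.val (hss t ht))
  have chain : ∀ i, i ≤ m → TN C (g i) ∧
      ExpRC.meas C prec (l0+1) l0 (g i) + i ≤ ExpRC.meas C prec (l0+1) l0 (g 0) := by
    intro i
    induction i with
    | zero => intro _; exact ⟨hTN0, by omega⟩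
    | succ i ihc =>
      intro hi
      obtain ⟨hT, hv⟩ := ihc (by omega)
      obtain ⟨hT', hlt⟩ := ExpRC.step_decrease hirr htrans hl0 hrsize hcompat
        (hrew i (by omega)) hT
      exact ⟨hT', by omega⟩
  have hm : m ≤ ExpRC.meas C prec (l0+1) l0 (g 0) := by
    have := (chain m le_rfl).2
    omega
  have hmeas0 : ExpRC.meas C prec (l0+1) l0 (g 0) =
      2 ^ ((l0+1) ^ (ExpRC.rkOf prec f + 1) * ((ns.map size).sum + l0)) := by
    rw [hg0, ExpRC.meas_app, if_neg hf]
    have hz : (ss.map (ExpRC.meas C prec (l0+1) l0)).sum = 0 := by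
      apply List.sum_eq_zero
      intro x hx
      obtain ⟨u, hu, rfl⟩ := List.mem_map.mp hx
      exact ExpRC.meas_val (hss u hu)
    rw [hz, Nat.add_zero]
  have hNn : (ns.map size).sum ≤ n := by
    rw [hg0, ExpRC.size_app] at hsize
    omega
  have hrkf : ExpRC.rkOf prec f + 1 ≤ Nat.card F + 1 := by
    have := ExpRC.rk_le_card prec f
    omega
  have hexp : (l0+1) ^ (ExpRC.rkOf prec f + 1) * ((ns.map size).sum + l0) ≤
      D * (n + l0) := by
    rw [hD]
    exact Nat.mul_le_mul (Nat.pow_le_pow_right (by omega) hrkf) (by omega)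
  calc m ≤ ExpRC.meas C prec (l0+1) l0 (g 0) := hm
    _ = 2 ^ ((l0+1) ^ (ExpRC.rkOf prec f + 1) * ((ns.map size).sum + l0)) := hmeas0
    _ ≤ 2 ^ (D * (n + l0)) := Nat.pow_le_pow_right (by norm_num) hexp
    _ = 2 ^ (D * l0) * 2 ^ (D * n) := by
        rw [← pow_add, ← Nat.mul_add, Nat.add_comm l0 n]
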